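/- Let n ≥ 1, let ρ_0, ..., ρ_{n−1} : ℝ → ℝ be measurable weight functions such that u ↦ u^i ρ_j(u) is Lebesgue integrable on ℝ for all 0 ≤ i ≤ n and 0 ≤ j ≤ n−1, and set μ_{ij} = ∫_ℝ u^i ρ_j(u) du. Then for every z ∈ ℝ, n! · det(z·μ_{ij} − μ_{i+1,j})_{0≤i,j≤n−1} = ∫_{ℝ^n} Δ_n(u) Δ_n^{(ρ)}(u) ∏_{k=1}^n (z − u_k) du_1 ⋯ du_n (a Heine-type integral formula). -/

import Mathlib

open MeasureTheory

/-- Combinatorial core of Andréief's identity. -/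
lemma andreief_perm_sum {n : ℕ} (M : Matrix (Fin n) (Fin n) ℝ) :
    ∑ σ : Equiv.Perm (Fin n), ∑ τ : Equiv.Perm (Fin n),
        ((Equiv.Perm.sign σ : ℤ) : ℝ) * ((Equiv.Perm.sign τ : ℤ) : ℝ) *
          ∏ k, M (σ k) (τ k)
      = (n.factorial : ℝ) * M.det := by
  classical
  rw [Finset.sum_comm]
  have inner : ∀ τ : Equiv.Perm (Fin n),
      (∑ σ : Equiv.Perm (Fin n),
        ((Equiv.Perm.sign σ : ℤ) : ℝ) * ((Equiv.Perm.sign τ : ℤ) : ℝ) *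
          ∏ k, M (σ k) (τ k)) = M.det := by
    intro τ
    rw [← Equiv.sum_comp (Equiv.mulRight τ)
      (fun σ => ((Equiv.Perm.sign σ : ℤ) : ℝ) * ((Equiv.Perm.sign τ : ℤ) : ℝ) *
        ∏ k, M (σ k) (τ k))]
    rw [Matrix.det_apply]
    refine Finset.sum_congr rfl fun π _ => ?_
    have hsign : ((Equiv.Perm.sign (π * τ) : ℤ) : ℝ) * ((Equiv.Perm.sign τ : ℤ) : ℝ)
        = ((Equiv.Perm.sign π : ℤ) : ℝ) := by
      rw [map_mul]
      push_cast
      have h2 : ((Equiv.Perm.sign τ : ℤ) : ℝ) * ((Equiv.Perm.sign τ : ℤ) : ℝ) = 1 := by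
        rcases Int.units_eq_one_or (Equiv.Perm.sign τ) with h | h <;> rw [h] <;> norm_num
      rw [mul_assoc, h2, mul_one]
    have hprod : (∏ k, M ((π * τ) k) (τ k)) = ∏ k, M (π k) k := by
      rw [← Equiv.prod_comp τ (fun k => M (π k) k)]
      rfl
    simp only [Equiv.coe_mulRight, hsign, hprod, Units.smul_def, zsmul_eq_mul]
  simp_rw [inner, Finset.sum_const, Finset.card_univ, Fintype.card_perm, Fintype.card_fin,
    nsmul_eq_mul]

/-- Andréief's identity. -/
lemma andreief {n : ℕ} (f g : Fin n → ℝ → ℝ)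
    (hint : ∀ i j, Integrable (fun u : ℝ => f i u * g j u)) :
    (∫ u : Fin n → ℝ,
        Matrix.det (Matrix.of fun i k : Fin n => f i (u k)) *
          Matrix.det (Matrix.of fun j k : Fin n => g j (u k)))
      = (n.factorial : ℝ) *
          Matrix.det (Matrix.of fun i j : Fin n => ∫ u : ℝ, f i u * g j u) := by
  classical
  have expand : ∀ u : Fin n → ℝ,
      Matrix.det (Matrix.of fun i k : Fin n => f i (u k)) *
        Matrix.det (Matrix.of fun j k : Fin n => g j (u k)) =
      ∑ σ : Equiv.Perm (Fin n), ∑ τ : Equiv.Perm (Fin n),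
        ((Equiv.Perm.sign σ : ℤ) : ℝ) * ((Equiv.Perm.sign τ : ℤ) : ℝ) *
          ∏ k, (f (σ k) (u k) * g (τ k) (u k)) := by
    intro u
    rw [Matrix.det_apply, Matrix.det_apply, Finset.sum_mul_sum]
    refine Finset.sum_congr rfl fun σ _ => Finset.sum_congr rfl fun τ _ => ?_
    simp only [Matrix.of_apply, Units.smul_def, zsmul_eq_mul]
    rw [Finset.prod_mul_distrib]
    ring
  simp_rw [expand]
  have hterm : ∀ σ τ : Equiv.Perm (Fin n),
      Integrable (fun u : Fin n → ℝ =>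
        ((Equiv.Perm.sign σ : ℤ) : ℝ) * ((Equiv.Perm.sign τ : ℤ) : ℝ) *
          ∏ k, (f (σ k) (u k) * g (τ k) (u k))) := by
    intro σ τ
    exact (Integrable.fintype_prod (f := fun k u => f (σ k) u * g (τ k) u)
      (fun k => hint (σ k) (τ k))).const_mul _
  rw [integral_finset_sum _ (fun σ _ => integrable_finset_sum _ (fun τ _ => hterm σ τ))]
  have : ∀ σ : Equiv.Perm (Fin n),
      (∫ u : Fin n → ℝ, ∑ τ : Equiv.Perm (Fin n),
        ((Equiv.Perm.sign σ : ℤ) : ℝ) * ((Equiv.Perm.sign τ : ℤ) : ℝ) *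
          ∏ k, (f (σ k) (u k) * g (τ k) (u k)))
      = ∑ τ : Equiv.Perm (Fin n),
          ((Equiv.Perm.sign σ : ℤ) : ℝ) * ((Equiv.Perm.sign τ : ℤ) : ℝ) *
            ∏ k, ∫ u : ℝ, f (σ k) u * g (τ k) u := by
    intro σ
    rw [integral_finset_sum _ (fun τ _ => hterm σ τ)]
    refine Finset.sum_congr rfl fun τ _ => ?_
    rw [integral_const_mul,
      integral_fintype_prod_volume_eq_prod (ι := Fin n) (fun k u => f (σ k) u * g (τ k) u)]
  simp_rw [this]
  exact andreief_perm_sum (Matrix.of fun i j : Fin n => ∫ u : ℝ, f i u * g j u)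

/-- Heine-type integral formula: for measurable weights
`ρ 0, ..., ρ (n-1)` with integrable moments up to order `n`, setting
`μ i j = ∫ u^i ρ j u du`, one has for every real `z`:
`n! · det (z·μ i j − μ (i+1) j) = ∫_{ℝ^n} Δₙ(u) Δₙ^{(ρ)}(u) ∏ₖ (z − u k) du`,
where `Δₙ(u) = ∏_{j<k} (u k − u j)` and `Δₙ^{(ρ)}(u) = det (ρ ℓ (u k))`. -/
theorem heine_integral_formula
    (n : ℕ) (hn : 1 ≤ n) (ρ : Fin n → ℝ → ℝ)
    (hmeas : ∀ j, Measurable (ρ j))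
    (hint : ∀ (i : Fin (n + 1)) (j : Fin n),
      Integrable (fun u : ℝ => u ^ (i : ℕ) * ρ j u))
    (z : ℝ) :
    (n.factorial : ℝ) *
        Matrix.det (Matrix.of fun i j : Fin n =>
          z * (∫ u : ℝ, u ^ (i : ℕ) * ρ j u) - ∫ u : ℝ, u ^ ((i : ℕ) + 1) * ρ j u)
      = ∫ u : Fin n → ℝ,
          (∏ j : Fin n, ∏ k ∈ Finset.Ioi j, (u k - u j)) *
            Matrix.det (Matrix.of fun ℓ k : Fin n => ρ ℓ (u k)) *
              ∏ k : Fin n, (z - u k) := by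
  classical
  set f : Fin n → ℝ → ℝ := fun i u => u ^ (i : ℕ) * (z - u) with hf
  have hfint : ∀ i j : Fin n, Integrable (fun u : ℝ => f i u * ρ j u) := by
    intro i j
    have h1 : Integrable (fun u : ℝ => u ^ (i : ℕ) * ρ j u) := by
      have := hint i.castSucc j
      simpa using this
    have h2 : Integrable (fun u : ℝ => u ^ ((i : ℕ) + 1) * ρ j u) := by
      have := hint i.succ j
      simpa using this
    have : (fun u : ℝ => f i u * ρ j u)
        = fun u : ℝ => z * (u ^ (i : ℕ) * ρ j u) - u ^ ((i : ℕ) + 1) * ρ j u := by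
      funext u; simp only [hf]; ring
    rw [this]
    exact (h1.const_mul z).sub h2
  have key := andreief f ρ hfint
  have hmat : (Matrix.of fun i j : Fin n =>
      z * (∫ u : ℝ, u ^ (i : ℕ) * ρ j u) - ∫ u : ℝ, u ^ ((i : ℕ) + 1) * ρ j u)
      = Matrix.of fun i j : Fin n => ∫ u : ℝ, f i u * ρ j u := by
    ext i j
    have h1 : Integrable (fun u : ℝ => u ^ (i : ℕ) * ρ j u) := by simpa using hint i.castSucc j
    have h2 : Integrable (fun u : ℝ => u ^ ((i : ℕ) + 1) * ρ j u) := by simpa using hint i.succ j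
    have : (fun u : ℝ => f i u * ρ j u)
        = fun u : ℝ => z * (u ^ (i : ℕ) * ρ j u) - u ^ ((i : ℕ) + 1) * ρ j u := by
      funext u; simp only [hf]; ring
    simp only [Matrix.of_apply, this]
    rw [integral_sub ((h1.const_mul z)) h2, integral_const_mul]
  have hintegrand : ∀ u : Fin n → ℝ,
      (∏ j : Fin n, ∏ k ∈ Finset.Ioi j, (u k - u j)) *
          Matrix.det (Matrix.of fun ℓ k : Fin n => ρ ℓ (u k)) *
            ∏ k : Fin n, (z - u k)
      = Matrix.det (Matrix.of fun i k : Fin n => f i (u k)) *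
          Matrix.det (Matrix.of fun j k : Fin n => ρ j (u k)) := by
    intro u
    have hF : Matrix.det (Matrix.of fun i k : Fin n => f i (u k))
        = (∏ k : Fin n, (z - u k)) * ∏ j : Fin n, ∏ k ∈ Finset.Ioi j, (u k - u j) := by
      have : (Matrix.of fun i k : Fin n => f i (u k))
          = Matrix.of fun i k : Fin n => (z - u k) * Matrix.transpose (Matrix.vandermonde u) i k := by
        ext i k
        simp [hf, Matrix.vandermonde, mul_comm]
      rw [this, Matrix.det_mul_row, Matrix.det_transpose, Matrix.det_vandermonde]
    rw [hF]; ring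
  rw [hmat, ← key]
  exact (integral_congr_ae (Filter.Eventually.of_forall hintegrand)).symm
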